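/- Let W = (𝒫,[n]) be an admissible Wilson loop diagram containing two propagators p = (i,j) and q = (i,j+1) adjacent on the edge i (with the cyclic interval from j to j+1 not containing i). Then (j, j+2) ∉ 𝒫 (it would cross q) and (j−1, j+1) ∉ 𝒫 (it would cross p). If moreover q is the only propagator of 𝒫 incident to the edge j+1 and p is the only propagator of 𝒫 incident to the edge j, then both Wilson loop diagrams ((𝒫 ∖ {q}) ∪ {(j, j+2)}, [n]) and ((𝒫 ∖ {p}) ∪ {(j−1, j+1)}, [n]) are admissible. -/
import Mathlib


/-- `b` lies strictly inside the cyclic interval going (in the increasing cyclic direction)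
from `a` to `c` in `ZMod n`. -/
def Inside {n : ℕ} (a b c : ZMod n) : Prop :=
  0 < (b - a).val ∧ (b - a).val < (c - a).val

/-- Two propagators (given as ordered pairs representing unordered pairs) cross:
exactly one endpoint of `q` lies strictly inside each of the two cyclic intervals into
which the endpoints of `p` divide `ZMod n`. -/
def Cross {n : ℕ} (p q : ZMod n × ZMod n) : Prop :=
  (Inside p.1 q.1 p.2 ∧ Inside p.2 q.2 p.1) ∨
    (Inside p.1 q.2 p.2 ∧ Inside p.2 q.1 p.1)

/-- The support `V_p = {i, i+1, j, j+1}` of a propagator `p = (i,j)`. -/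
def propSupp {n : ℕ} (p : ZMod n × ZMod n) : Finset (ZMod n) :=
  {p.1, p.1 + 1, p.2, p.2 + 1}

/-- The support `V_P` of a multiset of propagators. -/
def multiSupp {n : ℕ} (P : Multiset (ZMod n × ZMod n)) : Finset (ZMod n) :=
  (P.map propSupp).sup

/-- A Wilson loop diagram `(Ps, [n])` is admissible: no two propagators cross,
every nonempty subset `P` of the propagators satisfies `|V_P| ≥ |P| + 3`
(local density), and `n ≥ |Ps| + 4` (global density). -/
def Admissible (n : ℕ) (Ps : Multiset (ZMod n × ZMod n)) : Prop :=
  (∀ p ∈ Ps, ∀ q ∈ Ps, ¬ Cross p q) ∧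
  (∀ P : Multiset (ZMod n × ZMod n), P ≤ Ps → P ≠ 0 →
    Multiset.card P + 3 ≤ (multiSupp P).card) ∧
  Multiset.card Ps + 4 ≤ n



/- ### Auxiliary lemmas on `multiSupp` -/

lemma multiSupp_zero {n : ℕ} : multiSupp (0 : Multiset (ZMod n × ZMod n)) = ∅ := rfl

lemma multiSupp_cons {n : ℕ} (r : ZMod n × ZMod n) (P : Multiset (ZMod n × ZMod n)) :
    multiSupp (r ::ₘ P) = propSupp r ∪ multiSupp P := by
  simp [multiSupp, Multiset.sup_cons, Finset.sup_eq_union]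

lemma mem_multiSupp {n : ℕ} {x : ZMod n} {P : Multiset (ZMod n × ZMod n)} :
    x ∈ multiSupp P ↔ ∃ r ∈ P, x ∈ propSupp r := by
  induction P using Multiset.induction with
  | empty => simp [multiSupp_zero]
  | cons a s ih => simp [multiSupp_cons, ih]

lemma card_le_four {α : Type*} [DecidableEq α] (a b c d : α) :
    ({a, b, c, d} : Finset α).card ≤ 4 := by
  have h1 := Finset.card_insert_le a ({b, c, d} : Finset α)
  have h2 := Finset.card_insert_le b ({c, d} : Finset α)
  have h3 := Finset.card_insert_le c ({d} : Finset α)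
  have h4 : ({d} : Finset α).card = 1 := Finset.card_singleton d
  simp only [Finset.insert_eq] at *
  omega

lemma card_propSupp_le {n : ℕ} (r : ZMod n × ZMod n) : (propSupp r).card ≤ 4 :=
  card_le_four _ _ _ _

/- ### Density helpers -/

lemma density_pair {n : ℕ} {Ps : Multiset (ZMod n × ZMod n)} (hW : Admissible n Ps)
    {a b : ZMod n × ZMod n} (hne : a ≠ b) (ha : a ∈ Ps) (hb : b ∈ Ps)
    {S : Finset (ZMod n)} (hS : S.card ≤ 4)
    (hsa : propSupp a ⊆ S) (hsb : propSupp b ⊆ S) : False := by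
  have hb' : ({b} : Multiset (ZMod n × ZMod n)) ≤ Ps.erase a :=
    Multiset.singleton_le.mpr ((Multiset.mem_erase_of_ne (Ne.symm hne)).mpr hb)
  have hle : (a ::ₘ {b}) ≤ Ps := by
    calc a ::ₘ ({b} : Multiset (ZMod n × ZMod n)) ≤ a ::ₘ Ps.erase a :=
          Multiset.cons_le_cons _ hb'
      _ = Ps := Multiset.cons_erase ha
  have hd := hW.2.1 _ hle (by simp)
  have hsub : multiSupp (a ::ₘ ({b} : Multiset (ZMod n × ZMod n))) ⊆ S := by
    have hb0 : ({b} : Multiset (ZMod n × ZMod n)) = b ::ₘ 0 := rfl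
    rw [multiSupp_cons, hb0, multiSupp_cons, multiSupp_zero]
    intro x hx
    simp only [Finset.mem_union, Finset.union_empty] at hx
    rcases hx with hx | hx
    · exact hsa hx
    · exact hsb (by simpa using hx)
  have hcard := Finset.card_le_card hsub
  simp only [Multiset.card_cons, Multiset.card_singleton] at hd
  omega

lemma density_dup {n : ℕ} {Ps : Multiset (ZMod n × ZMod n)} (hW : Admissible n Ps)
    {a : ZMod n × ZMod n} (h2 : 2 ≤ Ps.count a) : False := by
  have hle : Multiset.replicate 2 a ≤ Ps := Multiset.le_count_iff_replicate_le.mp h2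
  have hd := hW.2.1 _ hle (by simp [Multiset.replicate_succ])
  have hrep : Multiset.replicate 2 a = a ::ₘ a ::ₘ 0 := rfl
  rw [hrep, multiSupp_cons, multiSupp_cons, multiSupp_zero] at hd
  have hcard : (propSupp a ∪ (propSupp a ∪ ∅)).card ≤ 4 := by
    simp only [Finset.union_empty, Finset.union_self]
    exact card_propSupp_le a
  simp only [Multiset.card_cons, Multiset.card_zero] at hd
  omega

/- ### `ZMod` valuation helpers -/

lemma shift_ne {n : ℕ} (a : ZMod n) {k l : ℕ} (hk : k < n) (hl : l < n) (hkl : k ≠ l) :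
    a + (k : ℕ) ≠ a + (l : ℕ) := by
  haveI : NeZero n := ⟨by omega⟩
  intro h
  have h2 : ((k : ℕ) : ZMod n) = ((l : ℕ) : ZMod n) := add_left_cancel h
  have := congrArg ZMod.val h2
  rw [ZMod.val_cast_of_lt hk, ZMod.val_cast_of_lt hl] at this
  exact hkl this

lemma val1 {n : ℕ} (hn : 6 ≤ n) : (1 : ZMod n).val = 1 := ZMod.val_one'' (by omega)

lemma val2 {n : ℕ} (hn : 6 ≤ n) : (2 : ZMod n).val = 2 := by
  have : ((2 : ℕ) : ZMod n).val = 2 := ZMod.val_cast_of_lt (by omega)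
  simpa using this

lemma wOne_ne_zero {n : ℕ} (hn : 6 ≤ n) : (1 : ZMod n) ≠ 0 := by
  haveI : NeZero n := ⟨by omega⟩
  intro h
  have := congrArg ZMod.val h
  rw [val1 hn, ZMod.val_zero] at this
  omega

lemma wTwo_ne_zero {n : ℕ} (hn : 6 ≤ n) : (2 : ZMod n) ≠ 0 := by
  haveI : NeZero n := ⟨by omega⟩
  intro h
  have := congrArg ZMod.val h
  rw [val2 hn, ZMod.val_zero] at this
  omega

lemma valneg1 {n : ℕ} (hn : 6 ≤ n) : (-1 : ZMod n).val = n - 1 := by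
  haveI : NeZero n := ⟨by omega⟩
  haveI : NeZero (1 : ZMod n) := ⟨wOne_ne_zero hn⟩
  rw [ZMod.val_neg_of_ne_zero, val1 hn]

lemma valneg2 {n : ℕ} (hn : 6 ≤ n) : (-2 : ZMod n).val = n - 2 := by
  haveI : NeZero n := ⟨by omega⟩
  haveI : NeZero (2 : ZMod n) := ⟨wTwo_ne_zero hn⟩
  rw [ZMod.val_neg_of_ne_zero, val2 hn]

lemma val_lt_sub_two {n : ℕ} (hn : 6 ≤ n) {y : ZMod n} (hy1 : y ≠ -1) (hy2 : y ≠ -2) :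
    y.val < n - 2 := by
  haveI : NeZero n := ⟨by omega⟩
  have h := ZMod.val_lt y
  have h1 : y.val ≠ n - 1 := fun h' =>
    hy1 (ZMod.val_injective n (by rw [h', valneg1 hn]))
  have h2 : y.val ≠ n - 2 := fun h' =>
    hy2 (ZMod.val_injective n (by rw [h', valneg2 hn]))
  omega

lemma val_sub_of_lt' {n : ℕ} (hn : 6 ≤ n) {x y : ZMod n} (h : x.val < y.val) :
    (x - y).val = x.val + n - y.val := by
  haveI : NeZero n := ⟨by omega⟩
  have hy : y ≠ 0 := by
    intro h0; rw [h0, ZMod.val_zero] at h; omega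
  haveI : NeZero y := ⟨hy⟩
  have hylt := ZMod.val_lt y
  rw [sub_eq_add_neg, ZMod.val_add_of_lt (by rw [ZMod.val_neg_of_ne_zero]; omega),
    ZMod.val_neg_of_ne_zero]
  omega

lemma Dsplit_le {n : ℕ} (hn : 6 ≤ n) {a b c : ZMod n} (h : (b - a).val ≤ (c - a).val) :
    (c - b).val = (c - a).val - (b - a).val := by
  haveI : NeZero n := ⟨by omega⟩
  have hcb : c - b = (c - a) - (b - a) := by ring
  rw [hcb, ZMod.val_sub h]

lemma Dsplit_gt {n : ℕ} (hn : 6 ≤ n) {a b c : ZMod n} (h : (c - a).val < (b - a).val) :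
    (c - b).val = (c - a).val + n - (b - a).val := by
  have hcb : c - b = (c - a) - (b - a) := by ring
  rw [hcb, val_sub_of_lt' hn h]

lemma eq_of_D_eq {n : ℕ} (hn : 6 ≤ n) {a x y : ZMod n} (h : (x - a).val = (y - a).val) :
    x = y := by
  haveI : NeZero n := ⟨by omega⟩
  have := ZMod.val_injective n h
  exact sub_left_inj.mp this

lemma D_pos_iff {n : ℕ} (hn : 6 ≤ n) {a x : ZMod n} : 0 < (x - a).val ↔ x ≠ a := by
  haveI : NeZero n := ⟨by omega⟩
  rw [Nat.pos_iff_ne_zero, Ne, ZMod.val_eq_zero, sub_eq_zero]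

/- ### `Inside` and `Cross` helpers -/

lemma inside_trans {n : ℕ} (hn : 6 ≤ n) {a x b y : ZMod n}
    (h1 : Inside a x b) (h2 : Inside b y a) : Inside x b y := by
  haveI : NeZero n := ⟨by omega⟩
  obtain ⟨hx0, hxb⟩ := h1
  obtain ⟨hyb0, hyba⟩ := h2
  have hbne : b - a ≠ 0 := by
    intro h0; rw [h0, ZMod.val_zero] at hxb; omega
  haveI : NeZero (b - a) := ⟨hbne⟩
  have hba : (a - b).val = n - (b - a).val := by
    have h' : a - b = -(b - a) := by ring
    rw [h', ZMod.val_neg_of_ne_zero]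
  have hblt := ZMod.val_lt (b - a)
  have hkey : (b - a).val < (y - a).val := by
    rcases lt_trichotomy ((y - a).val) ((b - a).val) with h | h | h
    · exfalso
      rw [Dsplit_gt hn h, hba] at hyba
      omega
    · exfalso
      have hyb : y = b := eq_of_D_eq hn h
      rw [hyb, sub_self, ZMod.val_zero] at hyb0
      omega
    · exact h
  constructor
  · rw [Dsplit_le hn (le_of_lt hxb)]; omega
  · rw [Dsplit_le hn (le_of_lt hxb), Dsplit_le hn (le_of_lt (hxb.trans hkey))]; omega

lemma Dtwo {n : ℕ} (hn : 6 ≤ n) (a : ZMod n) : ((a + 2) - a).val = 2 := by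
  rw [add_sub_cancel_left]; exact val2 hn

lemma Done {n : ℕ} (hn : 6 ≤ n) (a : ZMod n) : ((a + 1) - a).val = 1 := by
  rw [add_sub_cancel_left]; exact val1 hn

lemma inside_small {n : ℕ} (hn : 6 ≤ n) {a x : ZMod n} (h : Inside a x (a + 2)) :
    x = a + 1 := by
  haveI : NeZero n := ⟨by omega⟩
  obtain ⟨h0, h2⟩ := h
  rw [Dtwo hn] at h2
  have h1 : (x - a).val = 1 := by omega
  have := Done hn a
  exact eq_of_D_eq hn (by rw [h1, this])

lemma inside_mid {n : ℕ} (hn : 6 ≤ n) (a : ZMod n) : Inside a (a + 1) (a + 2) := by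
  constructor
  · rw [Done hn]; omega
  · rw [Done hn, Dtwo hn]; omega

lemma inside_outer {n : ℕ} (hn : 6 ≤ n) {a x : ZMod n}
    (h0 : x ≠ a) (h1 : x ≠ a + 1) (h2 : x ≠ a + 2) : Inside (a + 2) x a := by
  haveI : NeZero n := ⟨by omega⟩
  have ha2 : a - (a + 2) = -2 := by ring
  constructor
  · exact (D_pos_iff hn).mpr h2
  · rw [ha2, valneg2 hn]
    apply val_lt_sub_two hn
    · intro h; apply h1; rw [sub_eq_iff_eq_add] at h; rw [h]; ring
    · intro h; apply h0; rw [sub_eq_iff_eq_add] at h; rw [h]; ring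

lemma cross_small {n : ℕ} (hn : 6 ≤ n) {a : ZMod n} {r : ZMod n × ZMod n}
    (h : Cross (a, a + 2) r) : r.1 = a + 1 ∨ r.2 = a + 1 := by
  rcases h with ⟨h1, _⟩ | ⟨h1, _⟩
  · exact Or.inl (inside_small hn h1)
  · exact Or.inr (inside_small hn h1)

lemma cross_small' {n : ℕ} (hn : 6 ≤ n) {a : ZMod n} {r : ZMod n × ZMod n}
    (h : Cross r (a, a + 2)) : r.1 = a + 1 ∨ r.2 = a + 1 := by
  rcases h with ⟨h1, h2⟩ | ⟨h1, h2⟩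
  · exact Or.inr (inside_small hn (inside_trans hn h1 h2))
  · exact Or.inl (inside_small hn (inside_trans hn h2 h1))

lemma card_supp_a2 {n : ℕ} (hn : 6 ≤ n) (a : ZMod n) : 4 ≤ (propSupp (a, a + 2)).card := by
  have h01 : a ≠ a + 1 := by
    simpa using shift_ne (n := n) a (k := 0) (l := 1) (by omega) (by omega) (by omega)
  have h02 : a ≠ a + 2 := by
    simpa using shift_ne (n := n) a (k := 0) (l := 2) (by omega) (by omega) (by omega)
  have h03 : a ≠ a + 3 := by
    simpa using shift_ne (n := n) a (k := 0) (l := 3) (by omega) (by omega) (by omega)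
  have h12 : a + 1 ≠ a + 2 := by
    simpa using shift_ne (n := n) a (k := 1) (l := 2) (by omega) (by omega) (by omega)
  have h13 : a + 1 ≠ a + 3 := by
    simpa using shift_ne (n := n) a (k := 1) (l := 3) (by omega) (by omega) (by omega)
  have h23 : a + 2 ≠ a + 3 := by
    simpa using shift_ne (n := n) a (k := 2) (l := 3) (by omega) (by omega) (by omega)
  have e3 : a + 2 + 1 = a + 3 := by ring
  rw [propSupp]
  simp only [e3]
  rw [Finset.card_insert_of_notMem (by simp [h01, h02, h03]),
    Finset.card_insert_of_notMem (by simp [h12, h13]),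
    Finset.card_insert_of_notMem (by simp [h23]), Finset.card_singleton]

/- ### The generic replacement lemma -/

lemma admissible_replace {n : ℕ} {Ps : Multiset (ZMod n × ZMod n)}
    (hW : Admissible n Ps) (new kept removed : ZMod n × ZMod n)
    (hkept : kept ∈ Ps.erase removed) (hrem : removed ∈ Ps)
    (hnew4 : 4 ≤ (propSupp new).card)
    (hsub : propSupp removed ⊆ propSupp new ∪ propSupp kept)
    (x : ZMod n) (hxnew : x ∈ propSupp new)
    (hx : ∀ r ∈ Ps.erase removed, r ≠ kept → x ∉ propSupp r)
    (hcross : ∀ r ∈ Ps.erase removed, ¬ Cross new r ∧ ¬ Cross r new)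
    (hself : ¬ Cross new new) :
    Admissible n (new ::ₘ Ps.erase removed) := by
  obtain ⟨hW1, hW2, hW3⟩ := hW
  refine ⟨?_, ?_, ?_⟩
  · intro u hu v hv
    rcases Multiset.mem_cons.mp hu with rfl | hu' <;>
      rcases Multiset.mem_cons.mp hv with rfl | hv'
    · exact hself
    · exact (hcross v hv').1
    · exact (hcross u hu').2
    · exact hW1 u (Multiset.mem_of_mem_erase hu') v (Multiset.mem_of_mem_erase hv')
  · intro P hP hP0
    by_cases hnewP : new ∈ P
    · have hPP' : P = new ::ₘ P.erase new := (Multiset.cons_erase hnewP).symm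
      set P' := P.erase new with hP'def
      have hP'le : P' ≤ Ps.erase removed := by
        have h1 := Multiset.erase_le_erase new hP
        rwa [Multiset.erase_cons_head] at h1
      rw [hPP', multiSupp_cons, Multiset.card_cons]
      by_cases hkP : kept ∈ P'
      · have hQle : removed ::ₘ P' ≤ Ps := by
          calc removed ::ₘ P' ≤ removed ::ₘ Ps.erase removed := Multiset.cons_le_cons _ hP'le
            _ = Ps := Multiset.cons_erase hrem
        have hd := hW2 _ hQle (by simp)
        rw [multiSupp_cons, Multiset.card_cons] at hd
        refine hd.trans (Finset.card_le_card ?_)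
        intro y hy
        rcases Finset.mem_union.mp hy with hy | hy
        · rcases Finset.mem_union.mp (hsub hy) with hy' | hy'
          · exact Finset.mem_union_left _ hy'
          · exact Finset.mem_union_right _ (mem_multiSupp.mpr ⟨kept, hkP, hy'⟩)
        · exact Finset.mem_union_right _ hy
      · by_cases hP'0 : P' = 0
        · rw [hP'0, multiSupp_zero, Finset.union_empty]
          simpa using hnew4
        · have hd := hW2 P' (hP'le.trans (Multiset.erase_le _ _)) hP'0
          have hxS : x ∉ multiSupp P' := by
            rw [mem_multiSupp]
            rintro ⟨r, hr, hxr⟩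
            exact hx r (Multiset.mem_of_le hP'le hr) (fun h => hkP (h ▸ hr)) hxr
          have hins : insert x (multiSupp P') ⊆ propSupp new ∪ multiSupp P' := by
            intro y hy
            rcases Finset.mem_insert.mp hy with rfl | hy
            · exact Finset.mem_union_left _ hxnew
            · exact Finset.mem_union_right _ hy
          have hc2 := Finset.card_le_card hins
          rw [Finset.card_insert_of_notMem hxS] at hc2
          omega
    · have hPle : P ≤ Ps :=
        ((Multiset.le_cons_of_notMem hnewP).mp hP).trans (Multiset.erase_le _ _)
      exact hW2 P hPle hP0
  · have hcard : Multiset.card (new ::ₘ Ps.erase removed) = Multiset.card Ps := by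
      rw [Multiset.card_cons, Multiset.card_erase_of_mem hrem, Nat.pred_eq_sub_one]
      have : 1 ≤ Multiset.card Ps := Multiset.card_pos.mpr (by
        intro h; rw [h] at hrem; simp at hrem)
      omega
    rw [hcard]; exact hW3

/-- let `(Ps,[n])` be an admissible Wilson loop diagram containing
propagators `p = (i,j)` and `q = (i,j+1)` adjacent on the edge `i` (the cyclic
interval from `j` to `j+1` not containing `i`, i.e. `i ∉ {j, j+1}`).  Then
`(j,j+2) ∉ Ps` and `(j−1,j+1) ∉ Ps`; and if moreover `q` is the only propagator
incident to the edge `j+1` and `p` is the only propagator incident to the edge `j`,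
then replacing `q` by `(j,j+2)` and replacing `p` by `(j−1,j+1)` both yield
admissible diagrams. -/
theorem statement16 (n : ℕ) (Ps : Multiset (ZMod n × ZMod n))
    (hW : Admissible n Ps) (i j : ZMod n)
    (hp : (i, j) ∈ Ps) (hq : (i, j + 1) ∈ Ps)
    (hij : i ≠ j) (hij1 : i ≠ j + 1) :
    ((j, j + 2) ∉ Ps ∧ (j + 2, j) ∉ Ps) ∧
    ((j - 1, j + 1) ∉ Ps ∧ (j + 1, j - 1) ∉ Ps) ∧
    ((∀ r ∈ Ps, (r.1 = j + 1 ∨ r.2 = j + 1) → r = (i, j + 1) ∨ r = (j + 1, i)) →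
      (∀ r ∈ Ps, (r.1 = j ∨ r.2 = j) → r = (i, j) ∨ r = (j, i)) →
      Admissible n ((j, j + 2) ::ₘ Ps.erase (i, j + 1)) ∧
      Admissible n ((j - 1, j + 1) ::ₘ Ps.erase (i, j))) := by
  -- basic size facts
  have hcard1 : 1 ≤ Multiset.card Ps := Multiset.card_pos.mpr (by
    intro h; rw [h] at hp; simp at hp)
  have hn5 : 5 ≤ n := by have := hW.2.2; omega
  have hj1 : j ≠ j + 1 := by
    simpa using shift_ne (n := n) j (k := 0) (l := 1) (by omega) (by omega) (by omega)
  have hpq : ((i, j) : ZMod n × ZMod n) ≠ (i, j + 1) := fun h => hj1 (congrArg Prod.snd h)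
  have hn6 : 6 ≤ n := by
    have hb' : ({((i, j + 1) : ZMod n × ZMod n)} : Multiset _) ≤ Ps.erase (i, j) :=
      Multiset.singleton_le.mpr ((Multiset.mem_erase_of_ne (Ne.symm hpq)).mpr hq)
    have hle : ((i, j) ::ₘ {((i, j + 1) : ZMod n × ZMod n)}) ≤ Ps := by
      calc (i, j) ::ₘ ({((i, j + 1) : ZMod n × ZMod n)} : Multiset _)
            ≤ (i, j) ::ₘ Ps.erase (i, j) := Multiset.cons_le_cons _ hb'
        _ = Ps := Multiset.cons_erase hp
    have hc := Multiset.card_le_card hle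
    simp only [Multiset.card_cons, Multiset.card_singleton] at hc
    have := hW.2.2
    omega
  have hj21 : j + 2 ≠ j + 1 := by
    simpa using shift_ne (n := n) j (k := 2) (l := 1) (by omega) (by omega) (by omega)
  have e1 : j - 1 + 1 = j := by ring
  have e2 : j - 1 + 2 = j + 1 := by ring
  have e3 : j + 1 + 1 = j + 2 := by ring
  have e4 : j + 2 + 1 = j + 3 := by ring
  -- exclusions coming from density
  have hij2 : i ≠ j + 2 := by
    intro h
    subst h
    exact density_pair hW hpq hp hq (card_le_four j (j + 1) (j + 2) (j + 3))
      (by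
        intro x hx
        simp only [propSupp, Finset.mem_insert, Finset.mem_singleton] at hx ⊢
        rcases hx with rfl | rfl | rfl | rfl <;> simp [e4])
      (by
        intro x hx
        simp only [propSupp, Finset.mem_insert, Finset.mem_singleton] at hx ⊢
        rcases hx with rfl | rfl | rfl | rfl <;> simp [e3, e4])
  have hijm1 : i ≠ j - 1 := by
    intro h
    subst h
    exact density_pair hW hpq hp hq (card_le_four (j - 1) j (j + 1) (j + 2))
      (by
        intro x hx
        simp only [propSupp, Finset.mem_insert, Finset.mem_singleton] at hx ⊢
        rcases hx with rfl | rfl | rfl | rfl <;> simp [e1])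
      (by
        intro x hx
        simp only [propSupp, Finset.mem_insert, Finset.mem_singleton] at hx ⊢
        rcases hx with rfl | rfl | rfl | rfl <;> simp [e1, e3])
  have hswq : ((j + 1, i) : ZMod n × ZMod n) ∉ Ps := by
    intro h
    exact density_pair hW (a := (i, j + 1)) (b := (j + 1, i))
      (fun he => hij1 (congrArg Prod.fst he)) hq h
      (card_le_four i (i + 1) (j + 1) (j + 2))
      (by
        intro x hx
        simp only [propSupp, Finset.mem_insert, Finset.mem_singleton] at hx ⊢
        rcases hx with rfl | rfl | rfl | rfl <;> simp [e3])
      (by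
        intro x hx
        simp only [propSupp, Finset.mem_insert, Finset.mem_singleton] at hx ⊢
        rcases hx with rfl | rfl | rfl | rfl <;> simp [e3])
  have hswp : ((j, i) : ZMod n × ZMod n) ∉ Ps := by
    intro h
    exact density_pair hW (a := (i, j)) (b := (j, i))
      (fun he => hij (congrArg Prod.fst he)) hp h
      (card_le_four i (i + 1) j (j + 1))
      (by
        intro x hx
        simp only [propSupp, Finset.mem_insert, Finset.mem_singleton] at hx ⊢
        rcases hx with rfl | rfl | rfl | rfl <;> simp)
      (by
        intro x hx
        simp only [propSupp, Finset.mem_insert, Finset.mem_singleton] at hx ⊢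
        rcases hx with rfl | rfl | rfl | rfl <;> simp)
  have hqe : ((i, j + 1) : ZMod n × ZMod n) ∉ Ps.erase (i, j + 1) := by
    have h1 : Ps.count (i, j + 1) < 2 := by
      by_contra h
      exact density_dup hW (a := (i, j + 1)) (by omega)
    have h2 : 1 ≤ Ps.count (i, j + 1) := Multiset.one_le_count_iff_mem.mpr hq
    have h0 : Multiset.count (i, j + 1) (Ps.erase (i, j + 1)) = 0 := by
      rw [Multiset.count_erase_self]; omega
    exact Multiset.count_eq_zero.mp h0
  have hpe : ((i, j) : ZMod n × ZMod n) ∉ Ps.erase (i, j) := by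
    have h1 : Ps.count (i, j) < 2 := by
      by_contra h
      exact density_dup hW (a := (i, j)) (by omega)
    have h2 : 1 ≤ Ps.count (i, j) := Multiset.one_le_count_iff_mem.mpr hp
    have h0 : Multiset.count (i, j) (Ps.erase (i, j)) = 0 := by
      rw [Multiset.count_erase_self]; omega
    exact Multiset.count_eq_zero.mp h0
  -- part 1 and 2 : crossing exclusions
  have hmid : Inside j (j + 1) (j + 2) := inside_mid hn6 j
  have hout : Inside (j + 2) i j := inside_outer hn6 hij hij1 hij2
  have notA : ((j, j + 2) : ZMod n × ZMod n) ∉ Ps := fun h =>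
    hW.1 _ h _ hq (Or.inr ⟨hmid, hout⟩)
  have notA' : ((j + 2, j) : ZMod n × ZMod n) ∉ Ps := fun h =>
    hW.1 _ h _ hq (Or.inl ⟨hout, hmid⟩)
  have hmid' : Inside (j - 1) j (j + 1) := by
    have := inside_mid hn6 (j - 1)
    rwa [e1, e2] at this
  have hout' : Inside (j + 1) i (j - 1) := by
    have := inside_outer hn6 (a := j - 1) (x := i) hijm1
      (by rw [e1]; exact hij) (by rw [e2]; exact hij1)
    rwa [e2] at this
  have notB : ((j - 1, j + 1) : ZMod n × ZMod n) ∉ Ps := fun h =>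
    hW.1 _ h _ hp (Or.inr ⟨hmid', hout'⟩)
  have notB' : ((j + 1, j - 1) : ZMod n × ZMod n) ∉ Ps := fun h =>
    hW.1 _ h _ hp (Or.inl ⟨hout', hmid'⟩)
  refine ⟨⟨notA, notA'⟩, ⟨notB, notB'⟩, ?_⟩
  intro hU1 hU0
  have hkey1 : ∀ r ∈ Ps, (r.1 = j + 1 ∨ r.2 = j + 1) → r = (i, j + 1) := by
    intro r hr h
    rcases hU1 r hr h with h' | h'
    · exact h'
    · exact absurd (h' ▸ hr) hswq
  have hkey0 : ∀ r ∈ Ps, (r.1 = j ∨ r.2 = j) → r = (i, j) := by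
    intro r hr h
    rcases hU0 r hr h with h' | h'
    · exact h'
    · exact absurd (h' ▸ hr) hswp
  have hkeym : ∀ r ∈ Ps, j + 1 ∈ propSupp r → r = (i, j) ∨ r = (i, j + 1) := by
    intro r hr hmem
    simp only [propSupp, Finset.mem_insert, Finset.mem_singleton] at hmem
    rcases hmem with h | h | h | h
    · exact Or.inr (hkey1 r hr (Or.inl h.symm))
    · exact Or.inl (hkey0 r hr (Or.inl ((add_left_inj 1).mp h.symm)))
    · exact Or.inr (hkey1 r hr (Or.inr h.symm))
    · exact Or.inl (hkey0 r hr (Or.inr ((add_left_inj 1).mp h.symm)))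
  constructor
  · -- replace q = (i, j+1) by (j, j+2)
    refine admissible_replace hW (j, j + 2) (i, j) (i, j + 1)
      ((Multiset.mem_erase_of_ne hpq).mpr hp) hq (card_supp_a2 hn6 j) ?_ (j + 1) ?_ ?_ ?_ ?_
    · -- propSupp (i, j+1) ⊆ propSupp (j, j+2) ∪ propSupp (i, j)
      intro x hx
      simp only [propSupp, Finset.mem_insert, Finset.mem_singleton, Finset.mem_union] at hx ⊢
      rcases hx with rfl | rfl | rfl | rfl
      · tauto
      · tauto
      · tauto
      · left; right; right; left; exact e3
    · -- j + 1 ∈ propSupp (j, j+2)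
      simp [propSupp]
    · -- no other propagator uses j + 1 in its support
      intro r hr hrk hmem
      rcases hkeym r (Multiset.mem_of_mem_erase hr) hmem with h | h
      · exact hrk h
      · rw [h] at hr; exact hqe hr
    · -- no crossings with the new propagator
      intro r hr
      have hr' := Multiset.mem_of_mem_erase hr
      constructor
      · intro hc
        have h2 := hkey1 r hr' (cross_small hn6 hc)
        rw [h2] at hr; exact hqe hr
      · intro hc
        have h2 := hkey1 r hr' (cross_small' hn6 hc)
        rw [h2] at hr; exact hqe hr
    · -- new propagator does not cross itself
      intro hc
      rcases cross_small hn6 hc with h | h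
      · exact hj1 h
      · exact hj21 h
  · -- replace p = (i, j) by (j - 1, j + 1)
    have hqp : ((i, j + 1) : ZMod n × ZMod n) ≠ (i, j) := Ne.symm hpq
    refine admissible_replace hW (j - 1, j + 1) (i, j + 1) (i, j)
      ((Multiset.mem_erase_of_ne hqp).mpr hq) hp
      (by have := card_supp_a2 hn6 (j - 1); rwa [e2] at this) ?_ (j + 1) ?_ ?_ ?_ ?_
    · -- propSupp (i, j) ⊆ propSupp (j-1, j+1) ∪ propSupp (i, j+1)
      intro x hx
      simp only [propSupp, Finset.mem_insert, Finset.mem_singleton, Finset.mem_union] at hx ⊢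
      rcases hx with rfl | rfl | rfl | rfl
      · tauto
      · tauto
      · left; right; left; exact e1.symm
      · tauto
    · -- j + 1 ∈ propSupp (j-1, j+1)
      simp [propSupp]
    · intro r hr hrk hmem
      rcases hkeym r (Multiset.mem_of_mem_erase hr) hmem with h | h
      · rw [h] at hr; exact hpe hr
      · exact hrk h
    · intro r hr
      have hr' := Multiset.mem_of_mem_erase hr
      constructor
      · intro hc
        rw [← e2] at hc
        have h3 := cross_small hn6 hc
        rw [e1] at h3
        have h2 := hkey0 r hr' h3
        rw [h2] at hr; exact hpe hr
      · intro hc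
        rw [← e2] at hc
        have h3 := cross_small' hn6 hc
        rw [e1] at h3
        have h2 := hkey0 r hr' h3
        rw [h2] at hr; exact hpe hr
    · intro hc
      rw [← e2] at hc
      rcases cross_small hn6 hc with h | h
      · rw [e1] at h
        have h' : j - 1 = j := h
        have h2 : j - 1 + 1 = j + 1 := by rw [h']
        rw [e1] at h2
        exact hj1 h2
      · rw [e1, e2] at h
        exact hj1 h.symm
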